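/- Let χ be the bilinear form on ℤ² with χ(α,α)=χ(β,α)=χ(β,β)=−1, χ(α,β)=0. Define the phase φ: (ℤ² ∖ {0}) → ℝ via the hexagonal coordinates: φ(α)=0, φ(β)=1/3, with φ(av) = φ(v) for a > 0 and the phase of a positive combination lying between the phases of its constituents. Then for nonzero v, w with φ(w) − φ(v) ∈ (−1,1): χ(v,w) < 0 if and only if φ(w) − φ(v) ∈ (−2/3, 1/3), and χ(v,w) = 0 if and only if φ(w) − φ(v) ∈ {−2/3, 1/3}. -/

import Mathlib

open Complex

/-- The Euler pairing on ℤ² (basis `α = (1,0)`, `β = (0,1)`) with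
`χ(α,α) = χ(β,α) = χ(β,β) = −1` and `χ(α,β) = 0`. -/
def chi (v w : ℤ × ℤ) : ℤ := -(v.1 * w.1) - v.2 * w.1 - v.2 * w.2

/-- The hexagonal central charge `Z(nα + mβ) = n + m·e^{iπ/3}`. -/
noncomputable def Zhex (v : ℤ × ℤ) : ℂ :=
  (v.1 : ℂ) + (v.2 : ℂ) * Complex.exp ((Real.pi : ℂ) / 3 * Complex.I)

/-- The phase `φ(v) = Arg(Z(v))/π`, so that `φ(α) = 0` and `φ(β) = 1/3`. -/
noncomputable def phase (v : ℤ × ℤ) : ℝ := (Zhex v).arg / Real.pi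

lemma pi3cast : ((Real.pi : ℂ)) / 3 * Complex.I = ((Real.pi / 3 : ℝ) : ℂ) * Complex.I := by
  push_cast; ring

lemma Zhex_re (v : ℤ × ℤ) : (Zhex v).re = (v.1 : ℝ) + (v.2 : ℝ) * (1 / 2) := by
  rw [Zhex, pi3cast]
  simp only [Complex.add_re, Complex.mul_re, Complex.exp_ofReal_mul_I_re,
    Complex.exp_ofReal_mul_I_im, Real.cos_pi_div_three, Real.sin_pi_div_three,
    Complex.intCast_re, Complex.intCast_im]
  ring

lemma Zhex_im (v : ℤ × ℤ) : (Zhex v).im = (v.2 : ℝ) * (Real.sqrt 3 / 2) := by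
  rw [Zhex, pi3cast]
  simp only [Complex.add_im, Complex.mul_im, Complex.exp_ofReal_mul_I_re,
    Complex.exp_ofReal_mul_I_im, Real.cos_pi_div_three, Real.sin_pi_div_three,
    Complex.intCast_re, Complex.intCast_im]
  ring

lemma Zhex_ne_zero (v : ℤ × ℤ) (hv : v ≠ 0) : Zhex v ≠ 0 := by
  intro h
  have him : (v.2 : ℝ) * (Real.sqrt 3 / 2) = 0 := by rw [← Zhex_im, h]; simp
  have hs : Real.sqrt 3 ≠ 0 := by positivity
  have h2 : (v.2 : ℝ) = 0 := by
    rcases mul_eq_zero.mp him with h' | h'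
    · exact h'
    · exact absurd h' (by positivity)
  have h2' : v.2 = 0 := by exact_mod_cast h2
  have hre : (v.1 : ℝ) + (v.2 : ℝ) * (1/2) = 0 := by rw [← Zhex_re, h]; simp
  rw [h2'] at hre
  have h1' : v.1 = 0 := by exact_mod_cast (by simpa using hre : (v.1 : ℝ) = 0)
  exact hv (Prod.ext h1' h2')

lemma re_conj_mul (z w : ℂ) (c : ℝ) :
    ((starRingEnd ℂ) z * w * Complex.exp ((c : ℂ) * Complex.I)).re
      = ‖z‖ * ‖w‖ * Real.cos (w.arg - z.arg + c) := by
  conv_lhs => rw [← Complex.norm_mul_exp_arg_mul_I z, ← Complex.norm_mul_exp_arg_mul_I w]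
  rw [map_mul, Complex.conj_ofReal, ← Complex.exp_conj]
  have h1 : (starRingEnd ℂ) ((z.arg : ℂ) * Complex.I) = ((-z.arg : ℝ) : ℂ) * Complex.I := by
    rw [map_mul, Complex.conj_ofReal, Complex.conj_I]; push_cast; ring
  rw [h1]
  have h2 : (((‖z‖ : ℝ) : ℂ) * Complex.exp (((-z.arg : ℝ) : ℂ) * Complex.I))
        * (((‖w‖ : ℝ) : ℂ) * Complex.exp ((w.arg : ℂ) * Complex.I))
        * Complex.exp ((c : ℂ) * Complex.I)
      = ((‖z‖ * ‖w‖ : ℝ) : ℂ)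
        * Complex.exp (((w.arg - z.arg + c : ℝ) : ℂ) * Complex.I) := by
    rw [show ((w.arg - z.arg + c : ℝ) : ℂ) * Complex.I
        = ((-z.arg : ℝ) : ℂ) * Complex.I + (w.arg : ℂ) * Complex.I + (c : ℂ) * Complex.I by
      push_cast; ring, Complex.exp_add, Complex.exp_add]
    push_cast; ring
  rw [h2, Complex.re_ofReal_mul, Complex.exp_ofReal_mul_I_re]

lemma chi_re_eq (v w : ℤ × ℤ) :
    ((starRingEnd ℂ) (Zhex v) * Zhex w * Complex.exp (((Real.pi / 6 : ℝ) : ℂ) * Complex.I)).re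
      = -(Real.sqrt 3 / 2) * (chi v w : ℝ) := by
  have hs : Real.sqrt 3 ^ 2 = 3 := Real.sq_sqrt (by norm_num)
  simp only [Complex.mul_re, Complex.mul_im, Complex.conj_re, Complex.conj_im,
    Zhex_re, Zhex_im, Complex.exp_ofReal_mul_I_re, Complex.exp_ofReal_mul_I_im,
    Real.cos_pi_div_six, Real.sin_pi_div_six, chi]
  push_cast
  linear_combination (Real.sqrt 3 * (v.2 : ℝ) * (w.2 : ℝ) / 8) * hs

/-- For nonzero `v, w` with `φ(w) − φ(v) ∈ (−1,1)`: `χ(v,w) < 0` iff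
`φ(w) − φ(v) ∈ (−2/3, 1/3)`, and `χ(v,w) = 0` iff `φ(w) − φ(v) ∈ {−2/3, 1/3}`. -/
theorem chi_sign_vs_phase (v w : ℤ × ℤ) (hv : v ≠ 0) (hw : w ≠ 0)
    (h : phase w - phase v ∈ Set.Ioo (-1 : ℝ) 1) :
    (chi v w < 0 ↔ phase w - phase v ∈ Set.Ioo (-(2 / 3) : ℝ) (1 / 3)) ∧
    (chi v w = 0 ↔ (phase w - phase v = -(2 / 3) ∨ phase w - phase v = 1 / 3)) := by
  obtain ⟨hl, hr⟩ := h
  have hπ : (0 : ℝ) < Real.pi := Real.pi_pos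
  set Δ : ℝ := phase w - phase v with hΔ
  set a := (Zhex v).arg
  set b := (Zhex w).arg
  have hA : 0 < ‖Zhex v‖ := norm_pos_iff.mpr (Zhex_ne_zero v hv)
  have hB : 0 < ‖Zhex w‖ := norm_pos_iff.mpr (Zhex_ne_zero w hw)
  have hAB : 0 < ‖Zhex v‖ * ‖Zhex w‖ := mul_pos hA hB
  have hba : b - a = Real.pi * Δ := by
    rw [hΔ]; unfold phase; field_simp; rfl
  set θ : ℝ := b - a + Real.pi / 6 with hθ
  have hθΔ : θ = Real.pi * Δ + Real.pi / 6 := by rw [hθ, hba]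
  have hEq : -(Real.sqrt 3 / 2) * (chi v w : ℝ)
      = ‖Zhex v‖ * ‖Zhex w‖ * Real.cos θ := by
    rw [← chi_re_eq v w, re_conj_mul]
  have hs3 : (0 : ℝ) < Real.sqrt 3 := by positivity
  -- range of θ
  have hθlo : -(5 * Real.pi / 6) < θ := by rw [hθΔ]; nlinarith
  have hθhi : θ < 7 * Real.pi / 6 := by rw [hθΔ]; nlinarith
  -- cos θ > 0 ↔ θ ∈ (-π/2, π/2)
  have hcos_pos : 0 < Real.cos θ ↔ (-(Real.pi / 2) < θ ∧ θ < Real.pi / 2) := by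
    constructor
    · intro hc
      constructor
      · by_contra hle
        push_neg at hle
        have : Real.cos (-θ) ≤ 0 :=
          Real.cos_nonpos_of_pi_div_two_le_of_le (by linarith) (by linarith)
        rw [Real.cos_neg] at this; linarith
      · by_contra hle
        push_neg at hle
        have : Real.cos θ ≤ 0 :=
          Real.cos_nonpos_of_pi_div_two_le_of_le (by linarith) (by linarith)
        linarith
    · intro ⟨h1, h2⟩
      exact Real.cos_pos_of_mem_Ioo ⟨h1, h2⟩
  -- cos θ = 0 ↔ θ = ±π/2
  have hcos_zero : Real.cos θ = 0 ↔ (θ = -(Real.pi / 2) ∨ θ = Real.pi / 2) := by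
    constructor
    · intro hc
      obtain ⟨k, hk⟩ := Real.cos_eq_zero_iff.mp hc
      have hk1 : (-2 : ℝ) < (k : ℝ) := by nlinarith
      have hk2 : ((k : ℝ)) < 1 := by nlinarith
      have hk1' : (-2 : ℤ) < k := by exact_mod_cast hk1
      have hk2' : k < 1 := by exact_mod_cast hk2
      interval_cases k
      · left; rw [hk]; push_cast; ring
      · right; rw [hk]; push_cast; ring
    · rintro (h1 | h1)
      · rw [h1, ← Real.cos_neg]; simpa using Real.cos_pi_div_two
      · rw [h1]; exact Real.cos_pi_div_two
  -- θ bounds in terms of Δ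
  have hθΔ' : ∀ x : ℝ, θ = Real.pi * x + Real.pi / 6 → Δ = x := by
    intro x hx
    have : Real.pi * Δ = Real.pi * x := by rw [hθΔ] at hx; linarith
    exact mul_left_cancel₀ (ne_of_gt hπ) this
  have hcancel : ∀ x y : ℝ, Real.pi * x < Real.pi * y → x < y :=
    fun x y hxy => (mul_lt_mul_iff_right₀ hπ).mp hxy
  have hmul : ∀ x y : ℝ, x < y → Real.pi * x < Real.pi * y :=
    fun x y hxy => (mul_lt_mul_iff_right₀ hπ).mpr hxy
  constructor
  · constructor
    · intro hχ
      have hχ' : (chi v w : ℝ) < 0 := by exact_mod_cast hχ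
      have hc : 0 < Real.cos θ := by
        have h0 : 0 < ‖Zhex v‖ * ‖Zhex w‖ * Real.cos θ := by
          rw [← hEq]; nlinarith
        by_contra hle
        push_neg at hle
        nlinarith
      obtain ⟨h1, h2⟩ := hcos_pos.mp hc
      rw [hθΔ] at h1 h2
      refine Set.mem_Ioo.mpr ⟨hcancel _ _ ?_, hcancel _ _ ?_⟩ <;> linarith
    · intro hmem
      obtain ⟨h1, h2⟩ := Set.mem_Ioo.mp hmem
      have hc : 0 < Real.cos θ := hcos_pos.mpr
        ⟨by rw [hθΔ]; have := hmul _ _ h1; linarith, by rw [hθΔ]; have := hmul _ _ h2; linarith⟩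
      have h0 : 0 < ‖Zhex v‖ * ‖Zhex w‖ * Real.cos θ := mul_pos hAB hc
      rw [← hEq] at h0
      have : (chi v w : ℝ) < 0 := by nlinarith
      exact_mod_cast this
  · constructor
    · intro hχ
      have hχ' : (chi v w : ℝ) = 0 := by exact_mod_cast hχ
      have hc : Real.cos θ = 0 := by
        have h0 : ‖Zhex v‖ * ‖Zhex w‖ * Real.cos θ = 0 := by
          rw [← hEq, hχ']; ring
        rcases mul_eq_zero.mp h0 with h' | h'
        · exact absurd h' (ne_of_gt hAB)
        · exact h'
      rcases hcos_zero.mp hc with h1 | h1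
      · left
        exact hθΔ' (-(2/3)) (by rw [h1]; ring)
      · right
        exact hθΔ' (1/3) (by rw [h1]; ring)
    · rintro (h1 | h1)
      · have hc : Real.cos θ = 0 := hcos_zero.mpr (Or.inl (by rw [hθΔ, h1]; ring))
        have : -(Real.sqrt 3 / 2) * (chi v w : ℝ) = 0 := by rw [hEq, hc]; ring
        have hx : (chi v w : ℝ) = 0 := by
          rcases mul_eq_zero.mp this with h' | h'
          · exfalso; linarith
          · exact h'
        exact_mod_cast hx
      · have hc : Real.cos θ = 0 := hcos_zero.mpr (Or.inr (by rw [hθΔ, h1]; ring))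
        have : -(Real.sqrt 3 / 2) * (chi v w : ℝ) = 0 := by rw [hEq, hc]; ring
        have hx : (chi v w : ℝ) = 0 := by
          rcases mul_eq_zero.mp this with h' | h'
          · exfalso; linarith
          · exact h'
        exact_mod_cast hx
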